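/- In the cell complex of ordered symbols on n labels, if the coefficient of a face (a | b) in the boundary of a top cell g is defined as (−1)^{length(a)} times the sign of the permutation taking g to the concatenation ab, and the boundary is extended to concatenation products by the Leibniz rule ∂(g₁|g₂) = ∂g₁|g₂ + (−1)^{dim g₁} g₁|∂g₂, then ∂² = 0. -/

import Mathlib

/-!
Cells of the complex `cel(A)` are *symbols*: ordered lists of nonempty blocks (ordered
lists) with pairwise distinct entries.  We define the boundary operator on the free
abelian group on symbols: the coefficient of a face `(a | b)` in the boundary of a
one-block (top) cell `g` is `(−1)^{length a}` times the sign of the permutation taking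
`g` to the concatenation `a ++ b`, and the boundary is extended to concatenation
products by the Leibniz rule.  STATEMENT 3: `∂² = 0`.
-/

/-- All ways to unshuffle a list into a pair of complementary subsequences, together
with the sign of the permutation taking the list to the concatenation of the pair.
(When an element is sent to the second part, the sign changes by `(−1)^{#elements
already placed in the first part among later elements}`, computed recursively.) -/
def unshuffles : List ℕ → List (List ℕ × List ℕ × ℤ)
  | [] => [([], [], 1)]
  | x :: l =>
      ((unshuffles l).map fun p => (x :: p.1, p.2.1, p.2.2)) ++
      ((unshuffles l).map fun p => (p.1, x :: p.2.1, p.2.2 * (-1) ^ p.1.length))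

/-- The boundary of a top cell (a single block `b`): the sum over proper unshuffles
`b ↦ (a | c)` of the symbol `[a, c]` with coefficient `(−1)^{length a} · sgn`. -/
noncomputable def blockBdry (b : List ℕ) : (List (List ℕ)) →₀ ℤ :=
  ((unshuffles b).map fun p =>
      if p.1 ≠ [] ∧ p.2.1 ≠ [] then
        Finsupp.single [p.1, p.2.1] ((-1) ^ p.1.length * p.2.2)
      else 0).sum

/-- The boundary of a symbol, extended from top cells by the Leibniz rule
`∂(g₁|g₂) = ∂g₁|g₂ + (−1)^{dim g₁} g₁|∂g₂` (a block `b` has dimension `length b − 1`). -/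
noncomputable def bdry : List (List ℕ) → ((List (List ℕ)) →₀ ℤ)
  | [] => 0
  | b :: rest =>
      Finsupp.mapDomain (fun s => s ++ rest) (blockBdry b) +
        ((-1 : ℤ) ^ (b.length - 1)) • Finsupp.mapDomain (List.cons b) (bdry rest)

/-- The linear extension of the boundary operator to integral chains. -/
noncomputable def bdryChain (c : (List (List ℕ)) →₀ ℤ) : (List (List ℕ)) →₀ ℤ :=
  c.sum fun s k => k • bdry s

abbrev Tri := List ℕ × List ℕ × List ℕ

open Finsupp

noncomputable def SM {α β : Type} (φ : α → β) (w : α → ℤ) : (α →₀ ℤ) →ₗ[ℤ] (β →₀ ℤ) :=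
  Finsupp.lsum ℤ fun a => LinearMap.toSpanSingleton ℤ _ (Finsupp.single (φ a) (w a))

lemma SM_single {α β : Type} (φ : α → β) (w : α → ℤ) (a : α) (k : ℤ) :
    SM φ w (Finsupp.single a k) = Finsupp.single (φ a) (k * w a) := by
  simp [SM, Finsupp.lsum_single, LinearMap.toSpanSingleton_apply, Finsupp.smul_single, smul_eq_mul]

lemma list_sum_map_add {α M : Type*} [AddCommMonoid M] (l : List α) (f g : α → M) :
    (l.map fun x => f x + g x).sum = (l.map f).sum + (l.map g).sum := by
  induction l with
  | nil => simp
  | cons x l ih => simp [ih]; abel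

lemma finsupp_sum_list_sum {α β M : Type*} [AddCommMonoid M] (f : α →₀ ℤ) (l : List β)
    (F : β → α → ℤ → M) :
    (f.sum fun s k => (l.map fun p => F p s k).sum)
      = (l.map fun p => f.sum fun s k => F p s k).sum := by
  induction l with
  | nil => simp
  | cons p l ih => simp only [List.map_cons, List.sum_cons, Finsupp.sum_add, ih]

lemma unshuffles_length {b : List ℕ} : ∀ p ∈ unshuffles b, p.1.length + p.2.1.length = b.length := by
  induction b with
  | nil => simp [unshuffles]
  | cons x b ih =>
    intro p hp
    simp only [unshuffles, List.mem_append, List.mem_map] at hp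
    rcases hp with ⟨q, hq, rfl⟩ | ⟨q, hq, rfl⟩ <;> simp <;> have := ih q hq <;> omega

noncomputable def K1 (b : List ℕ) : Tri →₀ ℤ :=
  ((unshuffles b).map fun p => ((unshuffles p.1).map fun q =>
      Finsupp.single ((q.1, q.2.1, p.2.1) : Tri) (p.2.2 * q.2.2)).sum).sum

noncomputable def K2 (b : List ℕ) : Tri →₀ ℤ :=
  ((unshuffles b).map fun p => ((unshuffles p.2.1).map fun q =>
      Finsupp.single ((p.1, q.1, q.2.1) : Tri) (p.2.2 * q.2.2)).sum).sum

lemma map_sum_linear {α β γ : Type} (L : (β →₀ ℤ) →ₗ[ℤ] (γ →₀ ℤ)) (l : List α)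
    (F : α → (β →₀ ℤ)) : L (l.map F).sum = (l.map fun x => L (F x)).sum := by
  rw [map_list_sum, List.map_map]; rfl

lemma K1_cons (v : ℕ) (b : List ℕ) :
    K1 (v :: b) = SM (fun t : Tri => (v :: t.1, t.2.1, t.2.2)) (fun _ => 1) (K1 b)
      + SM (fun t : Tri => (t.1, v :: t.2.1, t.2.2)) (fun t => (-1) ^ t.1.length) (K1 b)
      + SM (fun t : Tri => (t.1, t.2.1, v :: t.2.2)) (fun t => (-1) ^ (t.1.length + t.2.1.length)) (K1 b) := by
  simp only [K1, map_sum_linear, List.map_map, Function.comp_def, SM_single, unshuffles,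
    List.map_append, List.sum_append, list_sum_map_add, mul_one, mul_assoc]
  congr 1
  refine congrArg List.sum (List.map_congr_left fun p hp => ?_)
  refine congrArg List.sum (List.map_congr_left fun q hq => ?_)
  rw [unshuffles_length q hq]
  congr 1
  ring

lemma K2_cons (v : ℕ) (b : List ℕ) :
    K2 (v :: b) = SM (fun t : Tri => (v :: t.1, t.2.1, t.2.2)) (fun _ => 1) (K2 b)
      + SM (fun t : Tri => (t.1, v :: t.2.1, t.2.2)) (fun t => (-1) ^ t.1.length) (K2 b)
      + SM (fun t : Tri => (t.1, t.2.1, v :: t.2.2)) (fun t => (-1) ^ (t.1.length + t.2.1.length)) (K2 b) := by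
  simp only [K2, map_sum_linear, List.map_map, Function.comp_def, SM_single, unshuffles,
    List.map_append, List.sum_append, list_sum_map_add, mul_one, mul_assoc, pow_add]
  rw [add_assoc]
  congr 1
  all_goals try congr 1
  all_goals
    refine congrArg List.sum (List.map_congr_left fun p hp => ?_)
    refine congrArg List.sum (List.map_congr_left fun q hq => ?_)
    congr 1
    ring

lemma K1_eq_K2 (b : List ℕ) : K1 b = K2 b := by
  induction b with
  | nil => rfl
  | cons v b ih => rw [K1_cons, K2_cons, ih]

noncomputable def DB : ((List (List ℕ)) →₀ ℤ) →ₗ[ℤ] ((List (List ℕ)) →₀ ℤ) :=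
  Finsupp.lsum ℤ fun s => LinearMap.toSpanSingleton ℤ _ (bdry s)

lemma DB_single (s : List (List ℕ)) (k : ℤ) : DB (Finsupp.single s k) = k • bdry s := by
  simp [DB, Finsupp.lsum_single, LinearMap.toSpanSingleton_apply]

lemma bdryChain_eq_DB (c : (List (List ℕ)) →₀ ℤ) : bdryChain c = DB c := rfl

lemma mapDomain_eq_sum {α β : Type} (f : α → β) (v : α →₀ ℤ) :
    Finsupp.mapDomain f v = v.sum fun a k => Finsupp.single (f a) k := rfl

lemma mapDomain_list_sum {α β γ : Type} (f : α → β) (l : List γ) (F : γ → α →₀ ℤ) :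
    Finsupp.mapDomain f (l.map F).sum = (l.map fun x => Finsupp.mapDomain f (F x)).sum := by
  have := map_sum_linear (Finsupp.lmapDomain ℤ ℤ f) l F
  simpa [Finsupp.lmapDomain_apply] using this

lemma smul_list_sum {α γ : Type} (k : ℤ) (l : List γ) (F : γ → (α →₀ ℤ)) :
    k • (l.map F).sum = (l.map fun x => k • F x).sum := by
  induction l with
  | nil => simp
  | cons x l ih => simp [smul_add, ih]

lemma neg_list_sum {α γ : Type} (l : List γ) (F : γ → (α →₀ ℤ)) :
    -((l.map F).sum) = (l.map fun x => -(F x)).sum := by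
  induction l with
  | nil => simp
  | cons x l ih =>
    simp only [List.map_cons, List.sum_cons, neg_add, ih]

lemma pow_pred (n : ℕ) (h : n ≠ 0) : ((-1 : ℤ)) ^ (n - 1) = -((-1) ^ n) := by
  obtain ⟨k, rfl⟩ := Nat.exists_eq_succ_of_ne_zero h
  simp [pow_succ]

def wgt (t : Tri) : ℤ :=
  if t.1 ≠ [] ∧ t.2.1 ≠ [] ∧ t.2.2 ≠ [] then (-1 : ℤ) ^ t.2.1.length else 0

noncomputable def S1 (rest : List (List ℕ)) (p : List ℕ × List ℕ × ℤ) : (List (List ℕ)) →₀ ℤ :=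
  if p.1 ≠ [] ∧ p.2.1 ≠ [] then
    ((-1 : ℤ) ^ p.1.length * p.2.2) •
      Finsupp.mapDomain (fun s => s ++ (p.2.1 :: rest)) (blockBdry p.1)
  else 0

noncomputable def S2 (rest : List (List ℕ)) (p : List ℕ × List ℕ × ℤ) : (List (List ℕ)) →₀ ℤ :=
  if p.1 ≠ [] ∧ p.2.1 ≠ [] then
    (-p.2.2) •
      Finsupp.mapDomain (List.cons p.1) (Finsupp.mapDomain (fun s => s ++ rest) (blockBdry p.2.1))
  else 0

noncomputable def S3 (rest : List (List ℕ)) (p : List ℕ × List ℕ × ℤ) : (List (List ℕ)) →₀ ℤ :=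
  if p.1 ≠ [] ∧ p.2.1 ≠ [] then
    (p.2.2 * (-1 : ℤ) ^ p.2.1.length) • Finsupp.mapDomain (fun s => p.1 :: p.2.1 :: s) (bdry rest)
  else 0

lemma A1 (b : List ℕ) (rest : List (List ℕ)) :
    ((unshuffles b).map (S1 rest)).sum
      = SM (fun t : Tri => t.1 :: t.2.1 :: t.2.2 :: rest) (fun _ => 1) (SM id wgt (K1 b)) := by
  simp only [K1, map_sum_linear, List.map_map, Function.comp_def, SM_single, id, mul_one]
  refine congrArg List.sum (List.map_congr_left fun p hp => ?_)
  by_cases hP : p.1 ≠ [] ∧ p.2.1 ≠ []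
  · rw [S1, if_pos hP, blockBdry, mapDomain_list_sum, smul_list_sum]
    refine congrArg List.sum (List.map_congr_left fun q hq => ?_)
    by_cases hQ : q.1 ≠ [] ∧ q.2.1 ≠ []
    · have hlen := unshuffles_length q hq
      simp only [Function.comp_def, if_pos hQ, Finsupp.mapDomain_single, Finsupp.smul_single,
        smul_eq_mul, List.cons_append, List.nil_append, wgt]
      rw [if_pos ⟨hQ.1, hQ.2, hP.2⟩, ← hlen, pow_add]
      congr 1
      have hxx : ((-1 : ℤ)) ^ q.1.length * (-1) ^ q.1.length = 1 := by
        rw [← pow_add, ← two_mul, pow_mul]; norm_num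
      calc ((-1:ℤ)) ^ q.1.length * (-1) ^ q.2.1.length * p.2.2 * ((-1) ^ q.1.length * q.2.2)
          = p.2.2 * q.2.2 * (-1) ^ q.2.1.length * ((-1) ^ q.1.length * (-1) ^ q.1.length) := by
            ring
        _ = p.2.2 * q.2.2 * (-1) ^ q.2.1.length := by rw [hxx, mul_one]
    · simp only [Function.comp_def, if_neg hQ, Finsupp.mapDomain_zero, smul_zero, wgt]
      rw [if_neg (by tauto), mul_zero, Finsupp.single_zero]
  · rw [S1, if_neg hP]
    by_cases hc : p.2.1 = []
    · refine Eq.symm (List.sum_eq_zero fun x hx => ?_)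
      obtain ⟨q, hq, rfl⟩ := List.mem_map.1 hx
      rw [wgt, if_neg (by tauto), mul_zero, Finsupp.single_zero]
    · have ha : p.1 = [] := by tauto
      rw [ha]
      simp [unshuffles, wgt]

lemma A2 (b : List ℕ) (rest : List (List ℕ)) :
    ((unshuffles b).map (S2 rest)).sum
      = -(SM (fun t : Tri => t.1 :: t.2.1 :: t.2.2 :: rest) (fun _ => 1) (SM id wgt (K2 b))) := by
  simp only [K2, map_sum_linear, List.map_map, Function.comp_def, SM_single, id, mul_one]
  rw [neg_list_sum]
  refine congrArg List.sum (List.map_congr_left fun p hp => ?_)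
  by_cases hP : p.1 ≠ [] ∧ p.2.1 ≠ []
  · rw [S2, if_pos hP, blockBdry, mapDomain_list_sum, mapDomain_list_sum, smul_list_sum]
    rw [neg_list_sum]
    refine congrArg List.sum (List.map_congr_left fun q hq => ?_)
    by_cases hQ : q.1 ≠ [] ∧ q.2.1 ≠ []
    · simp only [if_pos hQ, Finsupp.mapDomain_single, Finsupp.smul_single, smul_eq_mul,
        List.cons_append, List.nil_append, wgt]
      rw [if_pos ⟨hP.1, hQ.1, hQ.2⟩, ← Finsupp.single_neg]
      congr 1
      ring
    · simp only [if_neg hQ, Finsupp.mapDomain_zero, smul_zero, wgt]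
      rw [if_neg (by tauto), mul_zero, Finsupp.single_zero, neg_zero]
  · rw [S2, if_neg hP]
    rw [eq_comm, neg_eq_zero]
    by_cases ha : p.1 = []
    · refine List.sum_eq_zero fun x hx => ?_
      obtain ⟨q, hq, rfl⟩ := List.mem_map.1 hx
      rw [wgt, if_neg (by tauto), mul_zero, Finsupp.single_zero]
    · have hc : p.2.1 = [] := by tauto
      rw [hc]
      simp [unshuffles, wgt]

lemma coeff_cancel (m n : ℕ) (hn : n ≠ 0) (σ k : ℤ) :
    σ * (-1 : ℤ) ^ n * k + (-1 : ℤ) ^ (m + n - 1) * (k * ((-1) ^ m * σ)) = 0 := by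
  obtain ⟨n', rfl⟩ := Nat.exists_eq_succ_of_ne_zero hn
  have h1 : m + (n' + 1) - 1 = m + n' := by omega
  have hxx : ((-1 : ℤ)) ^ m * (-1) ^ m = 1 := by
    rw [← pow_add, ← two_mul, pow_mul]; norm_num
  rw [h1, pow_add, pow_succ]
  linear_combination (σ * (-1 : ℤ) ^ n' * k) * hxx

lemma A3 (b : List ℕ) (rest : List (List ℕ)) :
    ((unshuffles b).map (S3 rest)).sum
      + ((-1 : ℤ) ^ (b.length - 1)) •
          ((bdry rest).sum fun s k => k • Finsupp.mapDomain (fun t => t ++ s) (blockBdry b)) = 0 := by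
  rw [Finsupp.smul_sum]
  have step : ((bdry rest).sum fun s k =>
        (-1 : ℤ) ^ (b.length - 1) • k • Finsupp.mapDomain (fun t => t ++ s) (blockBdry b))
      = ((unshuffles b).map fun p => (bdry rest).sum fun s k =>
          (-1 : ℤ) ^ (b.length - 1) • k • Finsupp.mapDomain (fun t => t ++ s)
            (if p.1 ≠ [] ∧ p.2.1 ≠ [] then
              Finsupp.single [p.1, p.2.1] ((-1) ^ p.1.length * p.2.2) else 0)).sum := by
    rw [← finsupp_sum_list_sum]
    refine Finsupp.sum_congr fun s _ => ?_
    rw [blockBdry, mapDomain_list_sum, smul_list_sum, smul_list_sum]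
  rw [step, ← list_sum_map_add]
  refine List.sum_eq_zero fun x hx => ?_
  obtain ⟨p, hp, rfl⟩ := List.mem_map.1 hx
  by_cases hP : p.1 ≠ [] ∧ p.2.1 ≠ []
  · have hlen := unshuffles_length p hp
    have hn : p.2.1.length ≠ 0 := by
      simpa using fun h => hP.2 (List.length_eq_zero_iff.mp h)
    rw [S3, if_pos hP, mapDomain_eq_sum, Finsupp.smul_sum, ← Finsupp.sum_add, Finsupp.sum]
    refine Finset.sum_eq_zero fun s hs => ?_
    rw [if_pos hP, Finsupp.mapDomain_single]
    simp only [Finsupp.smul_single, smul_eq_mul, List.cons_append, List.nil_append]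
    rw [← Finsupp.single_add, ← hlen, coeff_cancel _ _ hn, Finsupp.single_zero]
  · rw [S3, if_neg hP]
    simp only [if_neg hP, Finsupp.mapDomain_zero, smul_zero, Finsupp.sum_fun_zero, add_zero]

lemma hA (b : List ℕ) (rest : List (List ℕ)) :
    DB (Finsupp.mapDomain (fun s => s ++ rest) (blockBdry b))
      = ((unshuffles b).map (S1 rest)).sum + ((unshuffles b).map (S2 rest)).sum
        + ((unshuffles b).map (S3 rest)).sum := by
  conv_rhs => rw [← list_sum_map_add (unshuffles b) (S1 rest) (S2 rest),
    ← list_sum_map_add (unshuffles b) (fun p => S1 rest p + S2 rest p) (S3 rest)]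
  rw [blockBdry, mapDomain_list_sum, map_sum_linear DB]
  refine congrArg List.sum (List.map_congr_left fun p hp => ?_)
  by_cases hP : p.1 ≠ [] ∧ p.2.1 ≠ []
  · have hm : p.1.length ≠ 0 := by
      simpa using fun h => hP.1 (List.length_eq_zero_iff.mp h)
    have hn : p.2.1.length ≠ 0 := by
      simpa using fun h => hP.2 (List.length_eq_zero_iff.mp h)
    have hxx : ((-1 : ℤ)) ^ p.1.length * (-1) ^ p.1.length = 1 := by
      rw [← pow_add, ← two_mul, pow_mul]; norm_num
    simp only [Function.comp_def, if_pos hP, Finsupp.mapDomain_single, List.cons_append,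
      List.nil_append, DB_single, S1, S2, S3]
    show _ • bdry (p.1 :: p.2.1 :: rest) = _
    simp only [bdry, Finsupp.mapDomain_add, Finsupp.mapDomain_smul, smul_add, smul_smul]
    rw [show (fun s => p.1 :: p.2.1 :: s) = (List.cons p.1 ∘ List.cons p.2.1) from rfl,
      Finsupp.mapDomain_comp]
    rw [← add_assoc]
    congr 1
    · congr 2
      rw [pow_pred _ hm]
      linear_combination (-p.2.2 : ℤ) * hxx
    · congr 1
      rw [pow_pred _ hm, pow_pred _ hn]
      linear_combination (p.2.2 * (-1 : ℤ) ^ p.2.1.length) * hxx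
  · simp only [Function.comp_def, if_neg hP, Finsupp.mapDomain_zero, map_zero, S1, S2, S3]
    simp

lemma DB_apply (f : (List (List ℕ)) →₀ ℤ) : DB f = f.sum fun s k => k • bdry s := rfl

lemma mapDomain_finsupp_sum {α β γ : Type} (g : α → β) (f : γ →₀ ℤ) (h : γ → ℤ → (α →₀ ℤ)) :
    Finsupp.mapDomain g (f.sum h) = f.sum fun a k => Finsupp.mapDomain g (h a k) := by
  have := map_finsuppSum (Finsupp.lmapDomain ℤ ℤ g) f h
  simpa [Finsupp.lmapDomain_apply] using this

lemma main_aux : ∀ g : List (List ℕ), bdryChain (bdry g) = 0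
  | [] => by simp [bdry, bdryChain]
  | b :: rest => by
    have ih := main_aux rest
    rw [bdryChain_eq_DB] at ih ⊢
    rw [show bdry (b :: rest) = Finsupp.mapDomain (fun s => s ++ rest) (blockBdry b) +
        ((-1 : ℤ) ^ (b.length - 1)) • Finsupp.mapDomain (List.cons b) (bdry rest) from rfl]
    rw [map_add, map_smul, hA]
    have h2 : DB (Finsupp.mapDomain (List.cons b) (bdry rest))
        = ((bdry rest).sum fun s k => k • Finsupp.mapDomain (fun t => t ++ s) (blockBdry b))
          + ((-1 : ℤ) ^ (b.length - 1)) • Finsupp.mapDomain (List.cons b) (DB (bdry rest)) := by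
      rw [mapDomain_eq_sum, map_finsuppSum]
      calc (bdry rest).sum (fun s k => DB (Finsupp.single (b :: s) k))
          = (bdry rest).sum (fun s k =>
              k • Finsupp.mapDomain (fun t => t ++ s) (blockBdry b)
                + (-1 : ℤ) ^ (b.length - 1) • (k • Finsupp.mapDomain (List.cons b) (bdry s))) := by
            refine Finsupp.sum_congr fun s _ => ?_
            rw [DB_single, show bdry (b :: s) = Finsupp.mapDomain (fun t => t ++ s) (blockBdry b) +
              ((-1 : ℤ) ^ (b.length - 1)) • Finsupp.mapDomain (List.cons b) (bdry s) from rfl,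
              smul_add, smul_comm]
        _ = _ := by
            rw [Finsupp.sum_add]
            congr 1
            rw [DB_apply, mapDomain_finsupp_sum, Finsupp.smul_sum]
            refine Finsupp.sum_congr fun s _ => ?_
            rw [Finsupp.mapDomain_smul]
    rw [h2, ih, Finsupp.mapDomain_zero, smul_zero, add_zero, A1, A2, K1_eq_K2]
    rw [add_neg_cancel, zero_add]
    exact A3 b rest


/-- for every symbol `g` (nonempty blocks, distinct entries), `∂(∂ g) = 0`. -/
theorem bdry_bdry_eq_zero (g : List (List ℕ)) (h₁ : ∀ b ∈ g, b ≠ [])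
    (h₂ : g.flatten.Nodup) : bdryChain (bdry g) = 0 := main_aux g
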